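/- Let μ be a nonnegative Borel measure on ℝ^n such that the Gauss–Weierstrass integral Wμ(x,t) = ∫ (4πt)^{-n/2} exp(-‖x−ξ‖²/(4t)) dμ(ξ) is finite for all t > 0 at x = 0. Then for every x₀ ∈ ℝ^n there exist positive constants c_n and c_α (for each α > 0, independent of x₀) such that c_n · M_{HL}μ(x₀) ≤ sup_{t>0} Wμ(x₀, t²) ≤ sup{ Wμ(x,t) : ‖x−x₀‖² < α² t } ≤ c_α · M_{HL}μ(x₀). -/

import Mathlib

open MeasureTheory

/-- The Gauss–Weierstrass (heat) kernel on ℝⁿ. -/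
noncomputable def W (n : ℕ) (x : EuclideanSpace ℝ (Fin n)) (t : ℝ) : ℝ :=
  (4 * Real.pi * t) ^ (-(n : ℝ) / 2) * Real.exp (-‖x‖ ^ 2 / (4 * t))

/-- The Gauss–Weierstrass integral of a measure. -/
noncomputable def heatExt {n : ℕ} (μ : Measure (EuclideanSpace ℝ (Fin n)))
    (x : EuclideanSpace ℝ (Fin n)) (t : ℝ) : ENNReal :=
  ∫⁻ ξ, ENNReal.ofReal (W n (x - ξ) t) ∂μ

/-- The centered Hardy–Littlewood maximal function of a measure. -/
noncomputable def MHL {n : ℕ} (μ : Measure (EuclideanSpace ℝ (Fin n)))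
    (x : EuclideanSpace ℝ (Fin n)) : ENNReal :=
  ⨆ (r : ℝ) (_ : 0 < r), μ (Metric.ball x r) / volume (Metric.ball x r)

open Metric

private lemma aux_volUniv0 : (volume (Set.univ : Set (EuclideanSpace ℝ (Fin 0)))) = 1 := by
  have h := (EuclideanSpace.volume_preserving_symm_measurableEquiv_toLp (Fin 0)).symm
  rw [← h.measure_preimage MeasurableSet.univ.nullMeasurableSet]
  rw [Set.preimage_univ, volume_pi, Measure.pi_univ]
  simp

private lemma aux_volBall {n : ℕ} (x : EuclideanSpace ℝ (Fin n)) {r : ℝ} (hr : 0 < r) :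
    volume (ball x r) = ENNReal.ofReal (r ^ n) * volume (ball (0 : EuclideanSpace ℝ (Fin n)) 1) := by
  cases n with
  | zero =>
      have hb : ∀ (y : EuclideanSpace ℝ (Fin 0)) (ρ : ℝ), 0 < ρ → ball y ρ = Set.univ := by
        intro y ρ hρ
        apply Set.eq_univ_iff_forall.2
        intro z
        have : z = y := Subsingleton.elim _ _
        simp [mem_ball, this, hρ]
      rw [hb x r hr, hb 0 1 one_pos, aux_volUniv0]
      simp
  | succ m =>
      have : Nontrivial (EuclideanSpace ℝ (Fin (m+1))) := by infer_instance
      rw [Measure.addHaar_ball volume x hr.le, finrank_euclideanSpace_fin]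

private lemma aux_volBall_pos {n : ℕ} (x : EuclideanSpace ℝ (Fin n)) {r : ℝ} (hr : 0 < r) :
    0 < volume (ball x r) := measure_ball_pos volume x hr

private lemma aux_muball {n : ℕ} (μ : Measure (EuclideanSpace ℝ (Fin n)))
    (x₀ : EuclideanSpace ℝ (Fin n)) {R : ℝ} (hR : 0 < R) :
    μ (ball x₀ R) ≤ MHL μ x₀ * volume (ball x₀ R) := by
  have h1 : μ (ball x₀ R) / volume (ball x₀ R) ≤ MHL μ x₀ := by
    refine le_iSup_of_le R ?_
    exact le_iSup_of_le hR le_rfl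
  calc μ (ball x₀ R) = μ (ball x₀ R) / volume (ball x₀ R) * volume (ball x₀ R) := by
        rw [ENNReal.div_mul_cancel (aux_volBall_pos x₀ hR).ne' measure_ball_lt_top.ne]
    _ ≤ MHL μ x₀ * volume (ball x₀ R) := by
        exact mul_le_mul_left h1 _

private lemma aux_lower {n : ℕ} (μ : Measure (EuclideanSpace ℝ (Fin n)))
    (x₀ : EuclideanSpace ℝ (Fin n)) {r : ℝ} (hr : 0 < r) :
    ENNReal.ofReal ((4*Real.pi*r^2) ^ (-(n:ℝ)/2) * Real.exp (-4⁻¹)) * μ (ball x₀ r)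
      ≤ heatExt μ x₀ (r^2) := by
  set c : ENNReal := ENNReal.ofReal ((4*Real.pi*r^2) ^ (-(n:ℝ)/2) * Real.exp (-4⁻¹)) with hc
  rw [heatExt, ← lintegral_indicator_const measurableSet_ball c]
  refine lintegral_mono fun ξ => ?_
  by_cases hξ : ξ ∈ ball x₀ r
  · rw [Set.indicator_of_mem hξ, hc]
    refine ENNReal.ofReal_le_ofReal ?_
    rw [W]
    have hd : ‖x₀ - ξ‖ < r := by
      rw [← dist_eq_norm, dist_comm]
      exact mem_ball.1 hξ
    have hd2 : ‖x₀ - ξ‖^2 ≤ r^2 := by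
      have := norm_nonneg (x₀ - ξ)
      nlinarith
    refine mul_le_mul_of_nonneg_left ?_ (Real.rpow_nonneg (by positivity) _)
    refine Real.exp_le_exp.2 ?_
    rw [neg_div, neg_le_neg_iff]
    rw [div_le_iff₀ (by positivity : (0:ℝ) < 4 * r^2)]
    nlinarith
  · rw [Set.indicator_of_notMem hξ]
    exact zero_le

private lemma aux_rsq_rpow {n : ℕ} {r : ℝ} (hr : 0 < r) :
    (r^2 : ℝ) ^ (-(n:ℝ)/2) = ((r^n : ℝ))⁻¹ := by
  rw [← Real.rpow_natCast r 2, ← Real.rpow_mul hr.le]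
  have : ((2:ℕ):ℝ) * (-(n:ℝ)/2) = -(n:ℝ) := by push_cast; ring
  rw [this, Real.rpow_neg hr.le, Real.rpow_natCast]

private lemma aux_lower2 {n : ℕ} (μ : Measure (EuclideanSpace ℝ (Fin n)))
    (x₀ : EuclideanSpace ℝ (Fin n)) {r : ℝ} (hr : 0 < r) :
    ENNReal.ofReal ((4*Real.pi) ^ (-(n:ℝ)/2) * Real.exp (-4⁻¹)
        * (volume (ball (0 : EuclideanSpace ℝ (Fin n)) 1)).toReal)
      * (μ (ball x₀ r) / volume (ball x₀ r)) ≤ heatExt μ x₀ (r^2) := by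
  have hvol0 : volume (ball x₀ r) ≠ 0 := (aux_volBall_pos x₀ hr).ne'
  have hvolT : volume (ball x₀ r) ≠ ⊤ := measure_ball_lt_top.ne
  rw [← mul_div_assoc, ENNReal.div_le_iff hvol0 hvolT]
  have hkey : ENNReal.ofReal ((4*Real.pi) ^ (-(n:ℝ)/2) * Real.exp (-4⁻¹)
      * (volume (ball (0 : EuclideanSpace ℝ (Fin n)) 1)).toReal)
      = ENNReal.ofReal ((4*Real.pi*r^2) ^ (-(n:ℝ)/2) * Real.exp (-4⁻¹)) * volume (ball x₀ r) := by
    rw [aux_volBall x₀ hr, ← ENNReal.ofReal_toReal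
      (measure_ball_lt_top (x := (0 : EuclideanSpace ℝ (Fin n))) (r := 1)).ne]
    rw [← ENNReal.ofReal_mul (by positivity), ← ENNReal.ofReal_mul
      (mul_nonneg (Real.rpow_nonneg (by positivity) _) (Real.exp_nonneg _))]
    congr 1
    have hsplit : (4*Real.pi*r^2 : ℝ) ^ (-(n:ℝ)/2)
        = (4*Real.pi) ^ (-(n:ℝ)/2) * ((r^n : ℝ))⁻¹ := by
      rw [Real.mul_rpow (by positivity) (by positivity), aux_rsq_rpow hr]
    rw [hsplit]
    have hrn : (r:ℝ)^n ≠ 0 := by positivity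
    rw [ENNReal.toReal_ofReal ENNReal.toReal_nonneg]
    field_simp
  calc ENNReal.ofReal ((4*Real.pi) ^ (-(n:ℝ)/2) * Real.exp (-4⁻¹)
        * (volume (ball (0 : EuclideanSpace ℝ (Fin n)) 1)).toReal) * μ (ball x₀ r)
      = ENNReal.ofReal ((4*Real.pi*r^2) ^ (-(n:ℝ)/2) * Real.exp (-4⁻¹)) * μ (ball x₀ r)
          * volume (ball x₀ r) := by rw [hkey]; ring
    _ ≤ heatExt μ x₀ (r^2) * volume (ball x₀ r) := mul_le_mul_left (aux_lower μ x₀ hr) _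

private lemma aux_natineq (m k : ℕ) : m * k ≤ 4 ^ k + m ^ 2 := by
  rcases le_total m k with h | h
  · have h2 : k ≤ 2 ^ k := (Nat.lt_two_pow_self (n := k)).le
    calc m * k ≤ k * k := Nat.mul_le_mul_right k h
      _ ≤ 2^k * 2^k := Nat.mul_le_mul h2 h2
      _ = 4^k := by rw [← Nat.mul_pow]
      _ ≤ 4^k + m^2 := Nat.le_add_right _ _
  · calc m * k ≤ m * m := Nat.mul_le_mul_left m h
      _ = m^2 := (sq m).symm
      _ ≤ 4^k + m^2 := Nat.le_add_left _ _

private lemma aux_q_lt_one (n : ℕ) : (2:ℝ)^n * Real.exp (-((n:ℝ)+1)) < 1 := by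
  rw [Real.exp_neg, mul_inv_lt_iff₀ (Real.exp_pos _), one_mul]
  have h2e : (2:ℝ) ≤ Real.exp 1 := by
    have := Real.add_one_le_exp 1; linarith
  calc (2:ℝ)^n ≤ (Real.exp 1)^n := pow_le_pow_left₀ (by norm_num) h2e n
    _ = Real.exp n := by rw [← Real.exp_nat_mul]; ring_nf
    _ < Real.exp ((n:ℝ)+1) := Real.exp_lt_exp.2 (by linarith)

private lemma aux_term_le (n k : ℕ) :
    ((2:ℝ)^n)^k * Real.exp (-(4^k/4 : ℝ))
      ≤ Real.exp (4*((n:ℝ)+1)^2) * ((2:ℝ)^n * Real.exp (-((n:ℝ)+1)))^k := by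
  rw [mul_pow, ← Real.exp_nat_mul]
  rw [show Real.exp (4*((n:ℝ)+1)^2) * (((2:ℝ)^n)^k * Real.exp ((k:ℝ) * -((n:ℝ)+1)))
      = ((2:ℝ)^n)^k * (Real.exp (4*((n:ℝ)+1)^2) * Real.exp ((k:ℝ) * -((n:ℝ)+1))) by ring]
  refine mul_le_mul_of_nonneg_left ?_ (by positivity)
  rw [← Real.exp_add]
  refine Real.exp_le_exp.2 ?_
  have h := aux_natineq (4*(n+1)) k
  have h' : (4*((n:ℝ)+1)) * k ≤ 4^k + (4*((n:ℝ)+1))^2 := by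
    have := (Nat.cast_le (α := ℝ)).2 h
    push_cast at this ⊢
    linarith
  nlinarith [h']

private lemma aux_series (n : ℕ) :
    ∑' k : ℕ, ENNReal.ofReal (((2:ℝ)^n)^k * Real.exp (-(4^k/4:ℝ)))
      ≤ ENNReal.ofReal (Real.exp (4*((n:ℝ)+1)^2)
          * (1 - (2:ℝ)^n * Real.exp (-((n:ℝ)+1)))⁻¹) := by
  set q : ℝ := (2:ℝ)^n * Real.exp (-((n:ℝ)+1)) with hqdef
  have hq0 : 0 ≤ q := by positivity
  have hq1 : q < 1 := aux_q_lt_one n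
  set C : ℝ := Real.exp (4*((n:ℝ)+1)^2) with hCdef
  have step1 : ∑' k : ℕ, ENNReal.ofReal (((2:ℝ)^n)^k * Real.exp (-(4^k/4:ℝ)))
      ≤ ∑' k : ℕ, ENNReal.ofReal C * (ENNReal.ofReal q)^k := by
    refine ENNReal.tsum_le_tsum fun k => ?_
    rw [← ENNReal.ofReal_pow hq0, ← ENNReal.ofReal_mul (Real.exp_nonneg _)]
    exact ENNReal.ofReal_le_ofReal (aux_term_le n k)
  refine step1.trans ?_
  rw [ENNReal.tsum_mul_left, ENNReal.tsum_geometric]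
  have h1q : (1:ENNReal) - ENNReal.ofReal q = ENNReal.ofReal (1 - q) := by
    rw [ENNReal.ofReal_sub _ hq0, ENNReal.ofReal_one]
  rw [h1q, ← ENNReal.ofReal_inv_of_pos (by linarith), ← ENNReal.ofReal_mul (Real.exp_nonneg _)]

private lemma aux_t_cancel {n : ℕ} {t : ℝ} (ht : 0 < t) :
    (t:ℝ) ^ (-(n:ℝ)/2) * (Real.sqrt t)^n = 1 := by
  rw [← Real.rpow_natCast (Real.sqrt t) n, Real.sqrt_eq_rpow,
    ← Real.rpow_mul ht.le, ← Real.rpow_add ht]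
  rw [show -(n:ℝ)/2 + 1/2 * (n:ℝ) = 0 by ring, Real.rpow_zero]

private lemma aux_upper {n : ℕ} (μ : Measure (EuclideanSpace ℝ (Fin n))) {α : ℝ} (hα : 0 < α)
    (x₀ x : EuclideanSpace ℝ (Fin n)) {t : ℝ} (ht : 0 < t) (hx : ‖x - x₀‖^2 < α^2*t) :
    heatExt μ x t ≤ ENNReal.ofReal ((4*Real.pi)^(-(n:ℝ)/2)
        * (volume (ball (0 : EuclideanSpace ℝ (Fin n)) 1)).toReal
        * ((α+1)^n + (2*(α+1))^n * (Real.exp (4*((n:ℝ)+1)^2)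
            * (1 - (2:ℝ)^n * Real.exp (-((n:ℝ)+1)))⁻¹))) * MHL μ x₀ := by
  set p : ℝ := (4*Real.pi)^(-(n:ℝ)/2) with hpdef
  have hp : 0 < p := Real.rpow_pos_of_pos (by positivity) _
  set β : ℝ := α + 1 with hβdef
  have hβ : 0 < β := by linarith
  set s : ℝ := Real.sqrt t with hsdef
  have hs : 0 < s := Real.sqrt_pos.2 ht
  have hst : s^2 = t := Real.sq_sqrt ht.le
  have hxs : ‖x - x₀‖ < α * s := by
    nlinarith [norm_nonneg (x - x₀), mul_pos hα hs]
  set v₁ : ENNReal := volume (ball (0 : EuclideanSpace ℝ (Fin n)) 1) with hv₁def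
  set v : ℝ := v₁.toReal with hvdef
  have hv₁v : v₁ = ENNReal.ofReal v := (ENNReal.ofReal_toReal measure_ball_lt_top.ne).symm
  have hv : 0 ≤ v := ENNReal.toReal_nonneg
  set A : ℕ → Set (EuclideanSpace ℝ (Fin n)) := fun k =>
    Nat.casesOn k (ball x₀ (β*s)) (fun k => ball x₀ (2^(k+1)*β*s) \ ball x₀ (2^k*β*s)) with hA
  set g : ℕ → ℝ := fun k => Nat.casesOn k 1 (fun k => Real.exp (-(4^k/4:ℝ))) with hg
  have hg0 : ∀ k, 0 ≤ g k := by
    intro k; cases k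
    · exact zero_le_one
    · exact (Real.exp_pos _).le
  have hAsub : ∀ k, A k ⊆ ball x₀ (2^k*β*s) := by
    intro k; cases k with
    | zero => simp [hA]
    | succ k => exact Set.diff_subset
  have hAuniv : (⋃ k, A k) = Set.univ := by
    ext ξ
    simp only [Set.mem_iUnion, Set.mem_univ, iff_true]
    have hex : ∃ k : ℕ, ‖ξ - x₀‖ < 2^k*β*s := by
      obtain ⟨k, hk⟩ := pow_unbounded_of_one_lt (y := (2:ℝ)) (‖ξ - x₀‖/(β*s)) one_lt_two
      refine ⟨k, ?_⟩
      rw [div_lt_iff₀ (by positivity)] at hk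
      calc ‖ξ - x₀‖ < 2^k*(β*s) := hk
        _ = 2^k*β*s := by ring
    rcases h : Nat.find hex with _ | k
    · refine ⟨0, ?_⟩
      have := Nat.find_spec hex
      rw [h] at this
      simpa [hA, mem_ball, dist_eq_norm] using this
    · refine ⟨k+1, ?_⟩
      have h1 := Nat.find_spec hex
      rw [h] at h1
      have h2 : ¬ (‖ξ - x₀‖ < 2^k*β*s) := Nat.find_min hex (by omega)
      simp only [hA, Set.mem_diff, mem_ball, dist_eq_norm]
      exact ⟨h1, h2⟩
  have hkernel : ∀ k, ∀ ξ ∈ A k, ENNReal.ofReal (W n (x - ξ) t)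
      ≤ ENNReal.ofReal ((4*Real.pi*t)^(-(n:ℝ)/2) * g k) := by
    intro k ξ hξ
    refine ENNReal.ofReal_le_ofReal ?_
    rw [W]
    refine mul_le_mul_of_nonneg_left ?_ (Real.rpow_nonneg (by positivity) _)
    cases k with
    | zero =>
        show Real.exp _ ≤ 1
        rw [Real.exp_le_one_iff]
        rw [neg_div, neg_nonpos]
        positivity
    | succ k =>
        show Real.exp _ ≤ Real.exp _
        rw [Real.exp_le_exp]
        obtain ⟨-, h2⟩ := hξ
        rw [mem_ball, dist_eq_norm, not_lt] at h2
        have htri : ‖ξ - x₀‖ - ‖x - x₀‖ ≤ ‖x - ξ‖ := by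
          have h3 : ‖ξ - x₀‖ ≤ ‖ξ - x‖ + ‖x - x₀‖ := by
            simpa using norm_sub_le_norm_sub_add_norm_sub ξ x x₀
          have h4 : ‖ξ - x‖ = ‖x - ξ‖ := norm_sub_rev _ _
          linarith
        have hk1 : (1:ℝ) ≤ 2^k := one_le_pow₀ (by norm_num)
        rw [hβdef] at h2
        have h5 : 2^k * s ≤ ‖x - ξ‖ := by
          nlinarith [mul_nonneg (mul_nonneg (sub_nonneg.2 hk1) hα.le) hs.le]
        have h6 : 4^k * t ≤ ‖x - ξ‖^2 := by
          have : (2^k * s)^2 ≤ ‖x - ξ‖^2 := by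
            refine pow_le_pow_left₀ (by positivity) h5 2
          calc (4:ℝ)^k * t = (2^k*s)^2 := by
                rw [← hst, show (4:ℝ)^k = (2:ℝ)^k*2^k by rw [← mul_pow]; norm_num]; ring
            _ ≤ ‖x - ξ‖^2 := this
        rw [neg_div, neg_le_neg_iff, le_div_iff₀ (by positivity)]
        calc (4:ℝ)^k/4 * (4*t) = 4^k * t := by ring
          _ ≤ ‖x - ξ‖^2 := h6
  set D : ℝ := Real.exp (4*((n:ℝ)+1)^2) * (1 - (2:ℝ)^n * Real.exp (-((n:ℝ)+1)))⁻¹ with hDdef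
  have hD : 0 ≤ D := by
    have hq := aux_q_lt_one n
    exact mul_nonneg (Real.exp_nonneg _) (inv_nonneg.2 (by linarith))
  have hAmeas : ∀ k, MeasurableSet (A k) := by
    intro k; cases k with
    | zero => exact measurableSet_ball
    | succ k => exact measurableSet_ball.diff measurableSet_ball
  have hcan : (t:ℝ)^(-(n:ℝ)/2) * s^n = 1 := by rw [hsdef]; exact aux_t_cancel ht
  have hterm : ∀ k, ∫⁻ ξ in A k, ENNReal.ofReal (W n (x - ξ) t) ∂μ
      ≤ ENNReal.ofReal (p * g k * ((2:ℝ)^k*β)^n) * (MHL μ x₀ * v₁) := by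
    intro k
    have hreal : (4*Real.pi*t)^(-(n:ℝ)/2) * g k * ((2^k*β*s)^n)
        = p * g k * ((2:ℝ)^k*β)^n := by
      rw [Real.mul_rpow (by positivity) ht.le, mul_pow]
      linear_combination ((4*Real.pi)^(-(n:ℝ)/2) * g k * ((2:ℝ)^k*β)^n) * hcan
    calc ∫⁻ ξ in A k, ENNReal.ofReal (W n (x - ξ) t) ∂μ
        ≤ ∫⁻ _ in A k, ENNReal.ofReal ((4*Real.pi*t)^(-(n:ℝ)/2) * g k) ∂μ :=
          setLIntegral_mono' (hAmeas k) (hkernel k)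
      _ = ENNReal.ofReal ((4*Real.pi*t)^(-(n:ℝ)/2) * g k) * μ (A k) := setLIntegral_const _ _
      _ ≤ ENNReal.ofReal ((4*Real.pi*t)^(-(n:ℝ)/2) * g k) * μ (ball x₀ (2^k*β*s)) :=
          mul_le_mul_right (measure_mono (hAsub k)) _
      _ ≤ ENNReal.ofReal ((4*Real.pi*t)^(-(n:ℝ)/2) * g k)
            * (MHL μ x₀ * volume (ball x₀ (2^k*β*s))) :=
          mul_le_mul_right (aux_muball μ x₀ (by positivity)) _
      _ = ENNReal.ofReal (p * g k * ((2:ℝ)^k*β)^n) * (MHL μ x₀ * v₁) := by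
          rw [aux_volBall x₀ (by positivity), ← hv₁def, ← hreal,
            ENNReal.ofReal_mul (mul_nonneg (Real.rpow_nonneg (by positivity) _) (hg0 k))]
          ring
  have hmain : heatExt μ x t
      ≤ (∑' k : ℕ, ENNReal.ofReal (p * g k * ((2:ℝ)^k*β)^n)) * (MHL μ x₀ * v₁) := by
    rw [heatExt, ← ENNReal.tsum_mul_right]
    calc ∫⁻ ξ, ENNReal.ofReal (W n (x - ξ) t) ∂μ
        = ∫⁻ ξ in Set.univ, ENNReal.ofReal (W n (x - ξ) t) ∂μ := (setLIntegral_univ _).symm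
      _ = ∫⁻ ξ in ⋃ k, A k, ENNReal.ofReal (W n (x - ξ) t) ∂μ := by rw [hAuniv]
      _ ≤ ∑' k, ∫⁻ ξ in A k, ENNReal.ofReal (W n (x - ξ) t) ∂μ := lintegral_iUnion_le _ _
      _ ≤ ∑' k : ℕ, ENNReal.ofReal (p * g k * ((2:ℝ)^k*β)^n) * (MHL μ x₀ * v₁) :=
          ENNReal.tsum_le_tsum hterm
  have hsum : (∑' k : ℕ, ENNReal.ofReal (p * g k * ((2:ℝ)^k*β)^n))
      ≤ ENNReal.ofReal (p * β^n) + ENNReal.ofReal (p * (2*β)^n * D) := by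
    rw [tsum_eq_zero_add' ENNReal.summable]
    refine add_le_add ?_ ?_
    · refine ENNReal.ofReal_le_ofReal ?_
      show p * g 0 * ((2:ℝ)^0*β)^n ≤ p * β^n
      rw [show g 0 = 1 from rfl]
      norm_num
    · have hck : ∀ k : ℕ, p * g (k+1) * ((2:ℝ)^(k+1)*β)^n
          = (p * (2*β)^n) * (((2:ℝ)^n)^k * Real.exp (-(4^k/4:ℝ))) := by
        intro k
        show p * Real.exp (-(4^k/4:ℝ)) * ((2:ℝ)^(k+1)*β)^n = _
        rw [show ((2:ℝ)^(k+1)*β)^n = (2*β)^n * ((2:ℝ)^n)^k by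
          rw [show ((2:ℝ))^(k+1)*β = (2*β)*2^k by ring, mul_pow, pow_right_comm]]
        ring
      calc (∑' k : ℕ, ENNReal.ofReal (p * g (k+1) * ((2:ℝ)^(k+1)*β)^n))
          = ∑' k : ℕ, ENNReal.ofReal (p * (2*β)^n)
              * ENNReal.ofReal (((2:ℝ)^n)^k * Real.exp (-(4^k/4:ℝ))) := by
            congr 1; funext k
            rw [hck k, ENNReal.ofReal_mul (by positivity)]
        _ = ENNReal.ofReal (p * (2*β)^n)
              * ∑' k : ℕ, ENNReal.ofReal (((2:ℝ)^n)^k * Real.exp (-(4^k/4:ℝ))) :=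
            ENNReal.tsum_mul_left
        _ ≤ ENNReal.ofReal (p * (2*β)^n) * ENNReal.ofReal D :=
            mul_le_mul_right (aux_series n) _
        _ = ENNReal.ofReal (p * (2*β)^n * D) := by
            rw [← ENNReal.ofReal_mul (by positivity)]
  refine hmain.trans ?_
  calc (∑' k : ℕ, ENNReal.ofReal (p * g k * ((2:ℝ)^k*β)^n)) * (MHL μ x₀ * v₁)
      ≤ (ENNReal.ofReal (p * β^n) + ENNReal.ofReal (p * (2*β)^n * D)) * (MHL μ x₀ * v₁) :=
        mul_le_mul_left hsum _
    _ = ENNReal.ofReal (p * v * (β^n + (2*β)^n * D)) * MHL μ x₀ := by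
        rw [hv₁v, ← ENNReal.ofReal_add (by positivity) (by positivity),
          show (MHL μ x₀ * ENNReal.ofReal v) = ENNReal.ofReal v * MHL μ x₀ by ring, ← mul_assoc,
          ← ENNReal.ofReal_mul (by positivity)]
        congr 2
        ring

theorem stmt8 {n : ℕ} (μ : Measure (EuclideanSpace ℝ (Fin n)))
    (hμ : ∀ t : ℝ, 0 < t → heatExt μ 0 t < ⊤) :
    ∃ cn : ℝ, 0 < cn ∧ ∀ α : ℝ, 0 < α → ∃ cα : ℝ, 0 < cα ∧
      ∀ x₀ : EuclideanSpace ℝ (Fin n),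
        ENNReal.ofReal cn * MHL μ x₀ ≤ (⨆ (t : ℝ) (_ : 0 < t), heatExt μ x₀ (t ^ 2)) ∧
        (⨆ (t : ℝ) (_ : 0 < t), heatExt μ x₀ (t ^ 2))
          ≤ (⨆ (x : EuclideanSpace ℝ (Fin n)) (t : ℝ) (_ : 0 < t)
              (_ : ‖x - x₀‖ ^ 2 < α ^ 2 * t), heatExt μ x t) ∧
        (⨆ (x : EuclideanSpace ℝ (Fin n)) (t : ℝ) (_ : 0 < t)
            (_ : ‖x - x₀‖ ^ 2 < α ^ 2 * t), heatExt μ x t)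
          ≤ ENNReal.ofReal cα * MHL μ x₀ := by
  set v : ℝ := (volume (ball (0 : EuclideanSpace ℝ (Fin n)) 1)).toReal with hvdef
  have hvpos : 0 < v := ENNReal.toReal_pos (aux_volBall_pos _ one_pos).ne' measure_ball_lt_top.ne
  have hp : (0:ℝ) < (4*Real.pi)^(-(n:ℝ)/2) := Real.rpow_pos_of_pos (by positivity) _
  refine ⟨(4*Real.pi)^(-(n:ℝ)/2) * Real.exp (-4⁻¹) * v, by positivity, ?_⟩
  intro α hα
  have hq := aux_q_lt_one n
  have hD : 0 ≤ Real.exp (4*((n:ℝ)+1)^2) * (1 - (2:ℝ)^n * Real.exp (-((n:ℝ)+1)))⁻¹ :=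
    mul_nonneg (Real.exp_nonneg _) (inv_nonneg.2 (by linarith))
  have hβn : (0:ℝ) < (α+1)^n := by positivity
  refine ⟨(4*Real.pi)^(-(n:ℝ)/2) * v * ((α+1)^n + (2*(α+1))^n
      * (Real.exp (4*((n:ℝ)+1)^2) * (1 - (2:ℝ)^n * Real.exp (-((n:ℝ)+1)))⁻¹)), ?_, ?_⟩
  · have h2 : (0:ℝ) ≤ (2*(α+1))^n := by positivity
    have := mul_nonneg h2 hD
    positivity
  intro x₀
  refine ⟨?_, ?_, ?_⟩
  · rw [MHL, ENNReal.mul_iSup]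
    refine iSup_le fun r => ?_
    rw [ENNReal.mul_iSup]
    refine iSup_le fun hr => ?_
    exact le_trans (aux_lower2 μ x₀ hr) (le_iSup_of_le r (le_iSup_of_le hr le_rfl))
  · refine iSup_le fun t => iSup_le fun ht => ?_
    refine le_iSup_of_le x₀ (le_iSup_of_le (t^2) (le_iSup_of_le (by positivity) ?_))
    have hcond : ‖x₀ - x₀‖ ^ 2 < α ^ 2 * t ^ 2 := by
      have h : (0:ℝ) < α ^ 2 * t ^ 2 := by positivity
      simpa [sub_self] using h
    exact le_iSup_of_le hcond le_rfl
  · refine iSup_le fun x => iSup_le fun t => iSup_le fun ht => iSup_le fun hcond => ?_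
    exact aux_upper μ hα x₀ x ht hcond
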